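/- Let M be an n×n matrix over ℝ (or ℂ). If the trace of M^k equals 0 for all integers k ≥ 2, then the trace of M equals 0. -/

import Mathlib

open LinearMap Polynomial

/-- Key lemma at the level of endomorphisms: if the trace of `f ^ k` vanishes for all
`k ≥ 2`, then the trace of `f` vanishes. Proved via the Fitting decomposition. -/
lemma trace_end_eq_zero_of_trace_pow_eq_zero {V : Type*} [AddCommGroup V] [Module ℝ V]
    [FiniteDimensional ℝ V] (f : Module.End ℝ V)
    (h : ∀ k : ℕ, 2 ≤ k → LinearMap.trace ℝ V (f ^ k) = 0) :
    LinearMap.trace ℝ V f = 0 := by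
  classical
  -- Choose `N` giving the Fitting decomposition with stabilized range.
  obtain ⟨N, hN⟩ := Filter.eventually_atTop.mp <|
    f.eventually_isCompl_ker_pow_range_pow.and f.eventually_iInf_range_pow_eq
  obtain ⟨hcompl, hrange⟩ := hN N le_rfl
  have hrange' : LinearMap.range (f ^ (N + 1)) = LinearMap.range (f ^ N) := by
    rw [← (hN (N + 1) (Nat.le_succ N)).2, hrange]
  set K : Submodule ℝ V := LinearMap.ker (f ^ N) with hK
  set W : Submodule ℝ V := LinearMap.range (f ^ N) with hW
  have hKf : ∀ k : ℕ, Set.MapsTo (f ^ k) K K := by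
    intro k x hx
    have hx' : (f ^ N) x = 0 := hx
    show (f ^ k) x ∈ K
    have hcomm : (f ^ N) ((f ^ k) x) = (f ^ k) ((f ^ N) x) := by
      rw [← Module.End.mul_apply, ← Module.End.mul_apply, ← pow_add, ← pow_add, add_comm]
    show (f ^ N) ((f ^ k) x) = 0
    rw [hcomm, hx', map_zero]
  have hWf : ∀ k : ℕ, Set.MapsTo (f ^ k) W W := by
    intro k x hx
    obtain ⟨y, hy⟩ := (hx : x ∈ W)
    show (f ^ k) x ∈ W
    refine ⟨(f ^ k) y, ?_⟩
    rw [← hy]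
    simp only [← Module.End.mul_apply, ← pow_add]
    rw [add_comm N k]
  -- the internal direct sum decomposition indexed by `Bool`
  set A : Bool → Submodule ℝ V := fun b => bif b then K else W with hA
  have hInternal : DirectSum.IsInternal A := by
    rw [DirectSum.isInternal_submodule_iff_isCompl A (i := true) (j := false) (by simp)
      (by ext b; cases b <;> simp)]
    exact hcompl
  have hAf : ∀ k : ℕ, ∀ b : Bool, Set.MapsTo (f ^ k) (A b) (A b) := by
    intro k b; cases b
    · exact hWf k
    · exact hKf k
  -- trace decomposition for each power
  have htr : ∀ k : ℕ, LinearMap.trace ℝ V (f ^ k) =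
      LinearMap.trace ℝ K ((f ^ k).restrict (hKf k)) +
      LinearMap.trace ℝ W ((f ^ k).restrict (hWf k)) := by
    intro k
    rw [trace_eq_sum_trace_restrict hInternal (hAf k), Fintype.sum_bool]
    rfl
  -- the restriction to `K` is nilpotent, so its trace powers vanish
  have hnilp : IsNilpotent (f.restrict (hKf 1)) := by
    refine ⟨N, ?_⟩
    rw [Module.End.pow_restrict (f' := f) N (hKf 1)]
    ext ⟨x, hx⟩
    exact hx
  have htrK : ∀ k : ℕ, 1 ≤ k → LinearMap.trace ℝ K ((f ^ k).restrict (hKf k)) = 0 := by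
    intro k hk
    have h1 : ((f ^ k).restrict (hKf k)) = (f.restrict (hKf 1)) ^ k := by
      rw [Module.End.pow_restrict (f' := f) k (hKf 1)]
    rw [h1]
    have : IsNilpotent ((f.restrict (hKf 1)) ^ k) := hnilp.pow_of_pos (by omega)
    exact (LinearMap.isNilpotent_trace_of_isNilpotent this).eq_zero
  -- hence for `k ≥ 2` the trace of the restriction to `W` vanishes
  have htrW : ∀ k : ℕ, 2 ≤ k → LinearMap.trace ℝ W ((f ^ k).restrict (hWf k)) = 0 := by
    intro k hk
    have := htr k
    rw [h k hk, htrK k (by omega)] at this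
    linarith
  -- the restriction `e` of `f` to `W` is bijective
  set e : Module.End ℝ W := f.restrict (hWf 1) with he
  have hepow : ∀ k : ℕ, e ^ k = (f ^ k).restrict (hWf k) := by
    intro k
    rw [he, Module.End.pow_restrict (f' := f) k (hWf 1)]
  have hsurj : Function.Surjective e := by
    rintro ⟨y, hy⟩
    obtain ⟨z, hz⟩ : y ∈ LinearMap.range (f ^ (N + 1)) := by rw [hrange']; exact hy
    refine ⟨⟨(f ^ N) z, ⟨z, rfl⟩⟩, ?_⟩
    apply Subtype.ext
    have : f ((f ^ N) z) = (f ^ (N + 1)) z := by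
      rw [pow_succ', Module.End.mul_apply]
    exact this.trans hz
  have hinj : Function.Injective e := by
    rwa [← LinearMap.injective_iff_surjective] at hsurj
  -- the constant coefficient of the characteristic polynomial of `e` is nonzero
  have hc0 : e.charpoly.coeff 0 ≠ 0 := by
    intro hc
    rw [show e.charpoly.coeff 0 = constantCoeff e.charpoly from rfl] at hc
    obtain ⟨m, hm, hm0⟩ := (LinearMap.charpoly_constantCoeff_eq_zero_iff e).mp hc
    exact hm (hinj (by simpa using hm0))
  -- Cayley-Hamilton: multiply by `e` and take traces
  have hCH : aeval e e.charpoly = 0 := LinearMap.aeval_self_charpoly e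
  have hsum : e * aeval e e.charpoly =
      ∑ i ∈ Finset.range (e.charpoly.natDegree + 1), e.charpoly.coeff i • e ^ (i + 1) := by
    rw [aeval_eq_sum_range, Finset.mul_sum]
    refine Finset.sum_congr rfl fun i _ => ?_
    rw [mul_smul_comm, ← pow_succ']
  have key : ∑ i ∈ Finset.range (e.charpoly.natDegree + 1),
      e.charpoly.coeff i * LinearMap.trace ℝ W (e ^ (i + 1)) = 0 := by
    have : LinearMap.trace ℝ W (e * aeval e e.charpoly) = 0 := by
      rw [hCH, mul_zero, map_zero]
    rw [hsum, map_sum] at this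
    simpa [smul_eq_mul] using this
  have hvanish : ∀ i : ℕ, 1 ≤ i → LinearMap.trace ℝ W (e ^ (i + 1)) = 0 := by
    intro i hi
    rw [hepow]
    exact htrW (i + 1) (by omega)
  have key2 : e.charpoly.coeff 0 * LinearMap.trace ℝ W (e ^ 1) = 0 := by
    rw [← key]
    symm
    apply Finset.sum_eq_single_of_mem 0 (Finset.mem_range.mpr (by omega))
    intro i _ hi
    rw [hvanish i (by omega), mul_zero]
  have hetr : LinearMap.trace ℝ W e = 0 := by
    have := mul_eq_zero.mp key2
    rcases this with hc | ht
    · exact absurd hc hc0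
    · simpa using ht
  -- conclude
  calc LinearMap.trace ℝ V f = LinearMap.trace ℝ V (f ^ 1) := by rw [pow_one]
    _ = 0 := by
        rw [htr 1, htrK 1 le_rfl, zero_add, ← hepow 1, pow_one, hetr]

/-- If the trace of `M^k` equals 0 for all integers `k ≥ 2`,
then the trace of `M` equals 0. -/
theorem trace_eq_zero_of_trace_pow_eq_zero (n : ℕ) (M : Matrix (Fin n) (Fin n) ℝ)
    (h : ∀ k : ℕ, 2 ≤ k → (M ^ k).trace = 0) : M.trace = 0 := by
  have htr : ∀ A : Matrix (Fin n) (Fin n) ℝ,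
      LinearMap.trace ℝ (Fin n → ℝ) (Matrix.toLin' A) = A.trace := by
    intro A
    rw [LinearMap.trace_eq_matrix_trace ℝ (Pi.basisFun ℝ (Fin n)),
      LinearMap.toMatrix_eq_toMatrix', LinearMap.toMatrix'_toLin']
  have hpow : ∀ k : ℕ, Matrix.toLin' (M ^ k) = (Matrix.toLin' M) ^ k := by
    intro k
    exact map_pow (Matrix.toLinAlgEquiv' : Matrix (Fin n) (Fin n) ℝ ≃ₐ[ℝ]
      Module.End ℝ (Fin n → ℝ)) M k
  rw [← htr M]
  apply trace_end_eq_zero_of_trace_pow_eq_zero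
  intro k hk
  rw [← hpow, htr]
  exact h k hk
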